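/- arXiv:1707.04847 — 3 statements merged into one kernel-verified Lean document; each statement's English description precedes it below -/
import Mathlib

section
/- In the setting of a unit vector field T with Frenet frame (T, N, B) on a Riemannian 3-manifold, with η = k N^♭ and second fundamental form h_{X,Y} = g(∇_X Y, T) of the distribution D = T^⊥, one has dη(T, B) = k(τ − h_{B,N}) and dη(T, N) = T(k) − k h_{N,N}. -/
variable {R : Type*} [CommRing R] [Algebra ℝ R]

/-- Exterior derivative of a bundled 1-form, evaluated on two vector fields. -/
def extDerOne (ω : Derivation ℝ R R →ₗ[R] R) (X Y : Derivation ℝ R R) : R :=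
  X (ω Y) - Y (ω X) - ω ⁅X, Y⁆

/-- Exterior derivative of a (pointwise-defined) 1-form given as a function on
vector fields. -/
def extDerOneF (α : Derivation ℝ R R → R) (X Y : Derivation ℝ R R) : R :=
  X (α Y) - Y (α X) - α ⁅X, Y⁆

/-- Exterior derivative of a 2-form given as a function on vector fields. -/
def extDerTwo (β : Derivation ℝ R R → Derivation ℝ R R → R)
    (X Y Z : Derivation ℝ R R) : R :=
  X (β Y Z) - Y (β X Z) + Z (β X Y) - β ⁅X, Y⁆ Z + β ⁅X, Z⁆ Y - β ⁅Y, Z⁆ X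

/-- Wedge product of two 1-forms. -/
def wedge11 (α β : Derivation ℝ R R → R) (X Y : Derivation ℝ R R) : R :=
  α X * β Y - α Y * β X

/-- Wedge product of a 1-form and a 2-form. -/
def wedge12 (α : Derivation ℝ R R → R) (β : Derivation ℝ R R → Derivation ℝ R R → R)
    (X Y Z : Derivation ℝ R R) : R :=
  α X * β Y Z - α Y * β X Z + α Z * β X Y

/-- Wedge product of a 2-form and a 1-form. -/
def wedge21 (β : Derivation ℝ R R → Derivation ℝ R R → R) (α : Derivation ℝ R R → R)
    (X Y Z : Derivation ℝ R R) : R :=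
  β X Y * α Z - β X Z * α Y + β Y Z * α X

/-- in the Frenet setting, with `η = k N^♭` and second fundamental
form `h(X,Y) = g(∇_X Y, T)` of `D = T^⊥`:
`dη(T,B) = k(τ − h_{B,N})` and `dη(T,N) = T(k) − k h_{N,N}`. -/
theorem stmt9
    (g : Derivation ℝ R R → Derivation ℝ R R → R)
    (cov : Derivation ℝ R R → Derivation ℝ R R → Derivation ℝ R R)
    (hg_symm : ∀ X Y, g X Y = g Y X)
    (hg_add : ∀ X Y Z, g (X + Y) Z = g X Z + g Y Z)
    (hg_smul : ∀ (f : R) X Y, g (f • X) Y = f * g X Y)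
    (hc_addl : ∀ X Y Z, cov (X + Y) Z = cov X Z + cov Y Z)
    (hc_smull : ∀ (f : R) X Y, cov (f • X) Y = f • cov X Y)
    (hc_addr : ∀ X Y Z, cov X (Y + Z) = cov X Y + cov X Z)
    (hc_leib : ∀ (f : R) X Y, cov X (f • Y) = (X f) • Y + f • cov X Y)
    (compat : ∀ X Y Z, X (g Y Z) = g (cov X Y) Z + g Y (cov X Z))
    (torsion_free : ∀ X Y, cov X Y - cov Y X = ⁅X, Y⁆)
    (T N B : Derivation ℝ R R)
    (hTT : g T T = 1) (hNN : g N N = 1) (hBB : g B B = 1)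
    (hTN : g T N = 0) (hTB : g T B = 0) (hNB : g N B = 0)
    (hframe : ∀ X, X = g X T • T + g X N • N + g X B • B)
    (k τ : R)
    (hFr1 : cov T T = k • N)
    (hFr2 : cov T N = (-k) • T + τ • B)
    (hFr3 : cov T B = (-τ) • N)
    (η : Derivation ℝ R R → R)
    (hη : ∀ X, η X = k * g N X)
    (h : Derivation ℝ R R → Derivation ℝ R R → R)
    (hh : ∀ X Y, h X Y = g (cov X Y) T) :
    extDerOneF η T B = k * (τ - h B N) ∧
    extDerOneF η T N = T k - k * h N N := by
  have gsub : ∀ X Y Z : Derivation ℝ R R, g (X - Y) Z = g X Z - g Y Z := by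
    intro X Y Z
    rw [sub_eq_add_neg, hg_add, ← neg_one_smul R Y, hg_smul]; ring
  have hNT : g N T = 0 := by rw [hg_symm]; exact hTN
  have hBN : g B N = 0 := by rw [hg_symm]; exact hNB
  -- g (cov B T) N = - h B N
  have h1 : g N (cov B T) = - h B N := by
    have hc := compat B T N
    rw [hTN, map_zero] at hc
    rw [hh, hg_symm N (cov B T)]
    linear_combination -hc - hg_symm T (cov B N)
  have h2 : g N (cov N T) = - h N N := by
    have hc := compat N T N
    rw [hTN, map_zero] at hc
    rw [hh, hg_symm N (cov N T)]
    linear_combination -hc - hg_symm T (cov N N)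
  have hbTB : g N ⁅T, B⁆ = -τ + h B N := by
    rw [← torsion_free, hg_symm, gsub, hFr3, hg_smul, hNN, hg_symm (cov B T) N, h1]
    ring
  have hbTN : g N ⁅T, N⁆ = h N N := by
    rw [← torsion_free, hg_symm, gsub, hFr2, hg_add, hg_smul, hg_smul, hTN, hBN,
      hg_symm (cov N T) N, h2]
    ring
  constructor
  · rw [extDerOneF, hη, hη, hη, hNB, hNT, hbTB]
    simp only [mul_zero, map_zero]
    ring
  · rw [extDerOneF, hη, hη, hη, hNN, hNT, hbTN]
    simp only [mul_one, mul_zero, map_zero]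
    ring
end

section
/- In the Frenet setting on a Riemannian 3-manifold with η = kN^♭ and dV_g the Riemannian volume form with (T,N,B) positively oriented, the 3-form η ∧ dη equals −k²(τ − h_{B,N}) dV_g. -/
variable {R : Type*} [CommRing R] [Algebra ℝ R]

/-- in the Frenet setting, with `η = k N^♭`, `h_{B,N} = g(∇_B N,T)`
and `dV_g` the Riemannian volume form with `(T,N,B)` positively oriented
(`dV_g(T,N,B) = 1`), the 3-form `η ∧ dη` equals `−k²(τ − h_{B,N}) dV_g`
(both sides evaluated on the frame `(T,N,B)`). -/
theorem stmt10
    (g : Derivation ℝ R R → Derivation ℝ R R → R)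
    (cov : Derivation ℝ R R → Derivation ℝ R R → Derivation ℝ R R)
    (hg_symm : ∀ X Y, g X Y = g Y X)
    (hg_add : ∀ X Y Z, g (X + Y) Z = g X Z + g Y Z)
    (hg_smul : ∀ (f : R) X Y, g (f • X) Y = f * g X Y)
    (hc_addl : ∀ X Y Z, cov (X + Y) Z = cov X Z + cov Y Z)
    (hc_smull : ∀ (f : R) X Y, cov (f • X) Y = f • cov X Y)
    (hc_addr : ∀ X Y Z, cov X (Y + Z) = cov X Y + cov X Z)
    (hc_leib : ∀ (f : R) X Y, cov X (f • Y) = (X f) • Y + f • cov X Y)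
    (compat : ∀ X Y Z, X (g Y Z) = g (cov X Y) Z + g Y (cov X Z))
    (torsion_free : ∀ X Y, cov X Y - cov Y X = ⁅X, Y⁆)
    (T N B : Derivation ℝ R R)
    (hTT : g T T = 1) (hNN : g N N = 1) (hBB : g B B = 1)
    (hTN : g T N = 0) (hTB : g T B = 0) (hNB : g N B = 0)
    (hframe : ∀ X, X = g X T • T + g X N • N + g X B • B)
    (k τ : R)
    (hFr1 : cov T T = k • N)
    (hFr2 : cov T N = (-k) • T + τ • B)
    (hFr3 : cov T B = (-τ) • N)
    (η : Derivation ℝ R R → R)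
    (hη : ∀ X, η X = k * g N X)
    (h : Derivation ℝ R R → Derivation ℝ R R → R)
    (hh : ∀ X Y, h X Y = g (cov X Y) T)
    (vol : Derivation ℝ R R → Derivation ℝ R R → Derivation ℝ R R → R)
    (hvol : vol T N B = 1) :
    wedge12 η (extDerOneF η) T N B = -(k ^ 2 * (τ - h B N)) * vol T N B := by
  have hsub : ∀ X Y Z : Derivation ℝ R R, g (X - Y) Z = g X Z - g Y Z := by
    intro X Y Z
    rw [sub_eq_add_neg, hg_add, ← neg_one_smul R Y, hg_smul]
    ring
  -- g (cov B T) N = - h B N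
  have hcompat := compat B T N
  rw [hTN] at hcompat
  have h1 : g (cov B T) N = -(h B N) := by
    have : (0 : R) = g (cov B T) N + g T (cov B N) := by
      simpa using hcompat
    rw [hh]
    linear_combination -this - hg_symm T (cov B N)
  -- g ⁅T,B⁆ N
  have hlie : g ⁅T, B⁆ N = -τ + h B N := by
    rw [← torsion_free, hsub, hFr3, hg_smul, hNN, h1]
    ring
  have hηT : η T = 0 := by rw [hη, hg_symm, hTN, mul_zero]
  have hηN : η N = k := by rw [hη, hNN, mul_one]
  have hηB : η B = 0 := by rw [hη, hNB, mul_zero]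
  have hdTB : extDerOneF η T B = k * (τ - h B N) := by
    rw [extDerOneF, hηT, hηB, hη, map_zero, map_zero, hg_symm, hlie]
    ring
  rw [wedge12, hηT, hηN, hηB, hdTB, hvol]
  ring
end

section
/- Let k : ℝ → ℝ be a positive periodic C² function and τ = c/k² for a constant c ≠ 0, satisfying k'' = τ² k. Then no such k exists; equivalently, the only periodic solutions of the system k'' = τ²k, (kτ)' + τ k' = 0 with k > 0 are k constant and τ = 0. -/
lemma derivPer (k : ℝ → ℝ) (L : ℝ) (hper : ∀ x, k (x + L) = k x) (x : ℝ) :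
    deriv k (x + L) = deriv k x := by
  have h : (fun y => k (y + L)) = k := funext hper
  rw [← deriv_comp_add_const k L x, h]

lemma auxA (k : ℝ → ℝ) (L : ℝ) (hL : 0 < L)
    (hper : ∀ x, k (x + L) = k x) (hpos : ∀ x, 0 < deriv (deriv k) x) : False := by
  have hmono : StrictMono (deriv k) := strictMono_of_deriv_pos hpos
  have h1 : deriv k 0 < deriv k (0 + L) := hmono (by linarith)
  rw [derivPer k L hper] at h1
  exact lt_irrefl _ h1

/-- (a) there is no positive periodic `C²` function `k : ℝ → ℝ`
with `τ = c/k²`, `c ≠ 0`, satisfying `k'' = τ² k`; (b) equivalently, the only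
periodic solutions of the system `k'' = τ² k`, `(kτ)' + τ k' = 0` with `k > 0`
are `k` constant and `τ = 0`. -/
theorem stmt16 :
    (∀ (k : ℝ → ℝ) (c L : ℝ), c ≠ 0 → 0 < L →
      ContDiff ℝ 2 k → (∀ x, 0 < k x) → (∀ x, k (x + L) = k x) →
      (∀ x, deriv (deriv k) x = (c / (k x) ^ 2) ^ 2 * k x) → False) ∧
    (∀ (k τ : ℝ → ℝ) (L : ℝ), 0 < L →
      ContDiff ℝ 2 k → ContDiff ℝ 1 τ →
      (∀ x, 0 < k x) → (∀ x, k (x + L) = k x) → (∀ x, τ (x + L) = τ x) →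
      (∀ x, deriv (deriv k) x = (τ x) ^ 2 * k x) →
      (∀ x, deriv (fun y => k y * τ y) x + τ x * deriv k x = 0) →
      (∀ x y, k x = k y) ∧ (∀ x, τ x = 0)) := by
  constructor
  · intro k c L hc hL hk hkpos hper hode
    refine auxA k L hL hper (fun x => ?_)
    rw [hode x]
    have h1 : c / (k x) ^ 2 ≠ 0 :=
      div_ne_zero hc (pow_ne_zero _ (ne_of_gt (hkpos x)))
    exact mul_pos (lt_of_le_of_ne (sq_nonneg _) (Ne.symm (pow_ne_zero 2 h1))) (hkpos x)
  · intro k τ L hL hk hτ hkpos hper hτper hode hsys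
    have hkd : ∀ x, HasDerivAt k (deriv k x) x :=
      fun x => (hk.differentiable (by norm_num) x).hasDerivAt
    have hτd : ∀ x, HasDerivAt τ (deriv τ x) x :=
      fun x => (hτ.differentiable one_ne_zero x).hasDerivAt
    -- product derivative
    have hmul : ∀ x, deriv (fun y => k y * τ y) x = deriv k x * τ x + k x * deriv τ x :=
      fun x => ((hkd x).mul (hτd x)).deriv
    have hkey : ∀ x, k x * deriv τ x + 2 * τ x * deriv k x = 0 := by
      intro x
      have := hsys x
      rw [hmul x] at this
      linarith
    -- g = k^2 * τ has zero derivative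
    have hg : ∀ x, HasDerivAt (fun y => (k y) ^ 2 * τ y) 0 x := by
      intro x
      have h := (((hkd x).pow 2).mul (hτd x))
      have e : 2 * k x * deriv k x * τ x + k x ^ 2 * deriv τ x = 0 := by
        linear_combination (k x) * hkey x
      exact (show HasDerivAt (k ^ 2 * τ) 0 x by simpa [e] using h)
    have hgc : ∀ x, (k x) ^ 2 * τ x = (k 0) ^ 2 * τ 0 := by
      intro x
      have : (fun y => (k y) ^ 2 * τ y) x = (fun y => (k y) ^ 2 * τ y) 0 :=
        is_const_of_deriv_eq_zero (fun y => (hg y).differentiableAt)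
          (fun y => (hg y).deriv) x 0
      simpa using this
    set c := (k 0) ^ 2 * τ 0 with hcdef
    by_cases hc : c = 0
    · -- τ ≡ 0
      have hτ0 : ∀ x, τ x = 0 := by
        intro x
        have h := hgc x
        rw [hc] at h
        have : (k x) ^ 2 ≠ 0 := pow_ne_zero _ (ne_of_gt (hkpos x))
        exact (mul_eq_zero.mp h).resolve_left this
      have hk''0 : ∀ x, deriv (deriv k) x = 0 := by
        intro x; rw [hode x, hτ0 x]; ring
    -- deriv k is constant
      have hk1 : ContDiff ℝ 1 (deriv k) := by
        have h2 : ContDiff ℝ ((1:ℕ)+1) k := by exact_mod_cast hk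
        have h3 := (contDiff_succ_iff_deriv.mp h2).2.2
        exact_mod_cast h3
      have hdc : ∀ x, deriv k x = deriv k 0 := by
        intro x
        exact is_const_of_deriv_eq_zero (hk1.differentiable one_ne_zero) hk''0 x 0
      set a := deriv k 0 with hadef
      have hlin : ∀ x, k x = k 0 + a * x := by
        intro x
        have h : ∀ y, HasDerivAt (fun z => k z - a * z) 0 y := by
          intro y
          have := (hkd y).sub ((hasDerivAt_id y).const_mul a)
          exact (show HasDerivAt (k - fun y => a * y) 0 y by simpa [hdc y] using this)
        have := is_const_of_deriv_eq_zero (fun y => (h y).differentiableAt)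
          (fun y => (h y).deriv) x 0
        simp only [mul_zero, sub_zero] at this
        linarith [this]
      have ha : a = 0 := by
        have := hper 0
        rw [hlin (0 + L), hlin 0] at this
        simp at this
        rcases this with h | h
        · exact h
        · exact absurd h (ne_of_gt hL)
      refine ⟨fun x y => ?_, hτ0⟩
      rw [hlin x, hlin y, ha]; ring
    · -- c ≠ 0 : contradiction via auxA
      exfalso
      refine auxA k L hL hper (fun x => ?_)
      rw [hode x]
      have hτne : τ x ≠ 0 := by
        intro h0
        apply hc
        rw [← hgc x, h0, mul_zero]
      exact mul_pos (lt_of_le_of_ne (sq_nonneg _) (Ne.symm (pow_ne_zero 2 hτne))) (hkpos x)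
end
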